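/- (Theorem 2: gradient equivalence of the two policy objectives) With parameterized policy π_θ, define J_{θ_old}(θ; s) = E_{a∼π_θ}[Q^{π_{θ_old}}(s,a) + α log R^{π_θ,α}(s,a) − α log(απ_θ(a|s))] + (1−α)E_{a∼q}[log R^{π_θ,α}(s,a) − log(απ_θ(a|s))] and J̃_{θ_old}(θ; s) = E_{a∼π_θ}[Q^{π_{θ_old}}(s,a) + α log R^{π_{θ_old}},α}(s,a) − α log π_θ(a|s)]. Then ∇_θ J_{θ_old}(θ; s)|_{θ=θ_old} = ∇_θ J̃_{θ_old}(θ; s)|_{θ=θ_old} for all s. -/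

import Mathlib

/-- Theorem 2: gradient equivalence of the two policy objectives:
`J` (with the ratio function depending on the optimization argument) and `J̃`
(with the ratio function frozen at `θ_old`) have equal gradients at `θ = θ_old`. -/
theorem policy_objective_gradient_equivalence {A : Type*} [Fintype A]
    (p : ℝ → A → ℝ) (q : A → ℝ) (Q : A → ℝ) (α : ℝ) (hα : α ∈ Set.Ioo (0:ℝ) 1)
    (hp : ∀ θ a, 0 < p θ a) (hq : ∀ a, 0 < q a)
    (hp1 : ∀ θ, ∑ a, p θ a = 1) (hq1 : ∑ a, q a = 1)
    (hdiff : ∀ a θ, DifferentiableAt ℝ (fun t => p t a) θ) (θold : ℝ) :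
    deriv (fun θ =>
        (∑ a, p θ a * (Q a
            + α * Real.log (α * p θ a / (α * p θ a + (1 - α) * q a))
            - α * Real.log (α * p θ a)))
          + (1 - α) * ∑ a, q a *
              (Real.log (α * p θ a / (α * p θ a + (1 - α) * q a))
                - Real.log (α * p θ a))) θold
    = deriv (fun θ =>
        ∑ a, p θ a * (Q a
            + α * Real.log (α * p θold a / (α * p θold a + (1 - α) * q a))
            - α * Real.log (p θ a))) θold := by
  obtain ⟨hα0, hα1⟩ := hα
  have hα1' : (0:ℝ) < 1 - α := by linarith
  set d : A → ℝ := fun a => deriv (fun t => p t a) θold with hd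
  have hpd : ∀ a, HasDerivAt (fun t => p t a) (d a) θold := fun a => (hdiff a θold).hasDerivAt
  have hDpos : ∀ θ a, 0 < α * p θ a + (1 - α) * q a :=
    fun θ a => add_pos (mul_pos hα0 (hp θ a)) (mul_pos hα1' (hq a))
  have hsumd : ∑ a, d a = 0 := by
    have h : HasDerivAt (fun θ => ∑ a, p θ a) (∑ a, d a) θold :=
      HasDerivAt.fun_sum fun a _ => hpd a
    have h2 : (fun θ => ∑ a, p θ a) = fun _ => (1:ℝ) := funext fun θ => hp1 θ
    rw [h2] at h
    exact ((hasDerivAt_const θold (1:ℝ)).unique h).symm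
  have hFrw : (fun θ =>
        (∑ a, p θ a * (Q a
            + α * Real.log (α * p θ a / (α * p θ a + (1 - α) * q a))
            - α * Real.log (α * p θ a)))
          + (1 - α) * ∑ a, q a *
              (Real.log (α * p θ a / (α * p θ a + (1 - α) * q a))
                - Real.log (α * p θ a)))
      = (fun θ =>
        (∑ a, p θ a * (Q a - α * Real.log (α * p θ a + (1 - α) * q a)))
          + (1 - α) * ∑ a, q a * (-Real.log (α * p θ a + (1 - α) * q a))) := by
    funext θ
    congr 1
    · refine Finset.sum_congr rfl fun a _ => ?_
      rw [Real.log_div (ne_of_gt (mul_pos hα0 (hp θ a))) (ne_of_gt (hDpos θ a))]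
      ring
    · congr 1
      refine Finset.sum_congr rfl fun a _ => ?_
      rw [Real.log_div (ne_of_gt (mul_pos hα0 (hp θ a))) (ne_of_gt (hDpos θ a))]
      ring
  rw [hFrw]
  have hlogD : ∀ a, HasDerivAt (fun θ => Real.log (α * p θ a + (1 - α) * q a))
      (α * d a / (α * p θold a + (1 - α) * q a)) θold := fun a => by
    have h1 : HasDerivAt (fun θ => α * p θ a + (1 - α) * q a) (α * d a) θold :=
      ((hpd a).const_mul α).add_const _
    exact h1.log (ne_of_gt (hDpos θold a))
  have hF : HasDerivAt (fun θ =>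
        (∑ a, p θ a * (Q a - α * Real.log (α * p θ a + (1 - α) * q a)))
          + (1 - α) * ∑ a, q a * (-Real.log (α * p θ a + (1 - α) * q a)))
      ((∑ a, (d a * (Q a - α * Real.log (α * p θold a + (1 - α) * q a))
          + p θold a * -(α * (α * d a / (α * p θold a + (1 - α) * q a)))))
        + (1 - α) * ∑ a, q a * -(α * d a / (α * p θold a + (1 - α) * q a))) θold := by
    refine HasDerivAt.add ?_ ?_
    · exact HasDerivAt.fun_sum fun a _ => (hpd a).mul (((hlogD a).const_mul α).const_sub (Q a))
    · exact HasDerivAt.const_mul _ (HasDerivAt.fun_sum fun a _ => ((hlogD a).neg).const_mul (q a))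
  have hG : HasDerivAt (fun θ =>
        ∑ a, p θ a * (Q a
            + α * Real.log (α * p θold a / (α * p θold a + (1 - α) * q a))
            - α * Real.log (p θ a)))
      (∑ a, (d a * (Q a
            + α * Real.log (α * p θold a / (α * p θold a + (1 - α) * q a))
            - α * Real.log (p θold a))
          + p θold a * -(α * (d a / p θold a)))) θold :=
    HasDerivAt.fun_sum fun a _ =>
      (hpd a).mul ((((hpd a).log (ne_of_gt (hp θold a))).const_mul α).const_sub _)
  rw [hF.deriv, hG.deriv]
  have key : ∀ a ∈ (Finset.univ : Finset A),
      (d a * (Q a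
            + α * Real.log (α * p θold a / (α * p θold a + (1 - α) * q a))
            - α * Real.log (p θold a))
          + p θold a * -(α * (d a / p θold a)))
      = ((d a * (Q a - α * Real.log (α * p θold a + (1 - α) * q a))
          + p θold a * -(α * (α * d a / (α * p θold a + (1 - α) * q a))))
        + (1 - α) * (q a * -(α * d a / (α * p θold a + (1 - α) * q a))))
        + α * Real.log α * d a := by
    intro a _
    rw [Real.log_div (ne_of_gt (mul_pos hα0 (hp θold a))) (ne_of_gt (hDpos θold a)),
      Real.log_mul hα0.ne' (hp θold a).ne']
    have h1 : p θold a ≠ 0 := (hp θold a).ne'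
    have h2 : α * p θold a + (1 - α) * q a ≠ 0 := (hDpos θold a).ne'
    field_simp
    ring
  rw [Finset.sum_congr rfl key]
  simp only [Finset.sum_add_distrib, ← Finset.mul_sum]
  rw [hsumd]
  ring
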